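/- Let K be a field and b, c ∈ K such that the Kubert-Tate curve E(b,c) has nonzero discriminant and b ≠ c. Then in the group of K-rational points of E(b,c), one has 5·(0,0) = ( bc(c² + c − b)/(b−c)² , bc²(b² − bc − c³)/(b−c)³ ). -/

import Mathlib

/-- The Kubert-Tate normal form curve E(b,c) : y^2 + (1-c)xy - by = x^3 - bx^2. -/
def Ebc {K : Type*} [CommRing K] (b c : K) : WeierstrassCurve.Affine K :=
  { a₁ := 1 - c, a₂ := -b, a₃ := -b, a₄ := 0, a₆ := 0 }
/-- The point (0, 0) on E(b,c), nonsingular since the discriminant is nonzero. -/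
noncomputable def P₀ {K : Type*} [Field K] (b c : K) (hΔ : (Ebc b c).Δ ≠ 0) :
    (Ebc b c).Point :=
  .some _ _ ((WeierstrassCurve.Affine.equation_iff_nonsingular_of_Δ_ne_zero (W := Ebc b c) hΔ).mp
    ((Ebc b c).equation_zero.mpr rfl))

lemma some_congr {K : Type*} [CommRing K] {W : WeierstrassCurve.Affine K}
    {x₁ y₁ x₂ y₂ : K} (h₁ : W.Nonsingular x₁ y₁) (h₂ : W.Nonsingular x₂ y₂)
    (hx : x₁ = x₂) (hy : y₁ = y₂) :
    WeierstrassCurve.Affine.Point.some _ _ h₁ = WeierstrassCurve.Affine.Point.some _ _ h₂ := by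
  subst hx; subst hy; rfl

lemma some_congr' {K : Type*} [CommRing K] {W : WeierstrassCurve.Affine K}
    {x₁ y₁ x₂ y₂ : K} (h₁ : W.Nonsingular x₁ y₁) (hx : x₁ = x₂) (hy : y₁ = y₂) :
    ∃ h₂ : W.Nonsingular x₂ y₂,
      WeierstrassCurve.Affine.Point.some _ _ h₁ = WeierstrassCurve.Affine.Point.some _ _ h₂ := by
  subst hx; subst hy; exact ⟨h₁, rfl⟩

set_option maxHeartbeats 1600000 in
open Classical in
open WeierstrassCurve.Affine in
theorem stmt_4 {K : Type*} [Field K] (b c : K) (hΔ : (Ebc b c).Δ ≠ 0) (hbc : b ≠ c) :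
    ∃ h : (Ebc b c).Nonsingular (b * c * (c ^ 2 + c - b) / (b - c) ^ 2)
        (b * c ^ 2 * (b ^ 2 - b * c - c ^ 3) / (b - c) ^ 3),
      5 • P₀ b c hΔ = WeierstrassCurve.Affine.Point.some _ _ h := by
  have hb : b ≠ 0 := by
    rintro rfl
    apply hΔ
    simp [Ebc, WeierstrassCurve.Δ, WeierstrassCurve.b₂, WeierstrassCurve.b₄,
      WeierstrassCurve.b₆, WeierstrassCurve.b₈]
  have hbc' : b - c ≠ 0 := sub_ne_zero.mpr hbc
  have h2 : (Ebc b c).Nonsingular b (b * c) := by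
    apply (WeierstrassCurve.Affine.equation_iff_nonsingular_of_Δ_ne_zero (W := Ebc b c) hΔ).mp
    rw [WeierstrassCurve.Affine.equation_iff]; simp only [Ebc]; ring
  have h3 : (Ebc b c).Nonsingular c (b - c) := by
    apply (WeierstrassCurve.Affine.equation_iff_nonsingular_of_Δ_ne_zero (W := Ebc b c) hΔ).mp
    rw [WeierstrassCurve.Affine.equation_iff]; simp only [Ebc]; ring
  have hy1 : (0 : K) ≠ (Ebc b c).negY 0 0 := by
    simp only [WeierstrassCurve.Affine.negY, Ebc]
    intro h; exact hb (by linear_combination -h)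
  -- 2P = (b, bc)
  have e2 : P₀ b c hΔ + P₀ b c hΔ = .some _ _ h2 := by
    rw [P₀, WeierstrassCurve.Affine.Point.add_of_Y_ne hy1]
    have hs : (Ebc b c).slope 0 0 0 0 = 0 := by
      rw [slope_of_Y_ne rfl hy1]
      simp [Ebc, WeierstrassCurve.Affine.negY]
    apply some_congr
    · rw [WeierstrassCurve.Affine.addX, hs]; simp [Ebc]
    · rw [WeierstrassCurve.Affine.addY, WeierstrassCurve.Affine.negAddY,
        WeierstrassCurve.Affine.addX, WeierstrassCurve.Affine.negY, hs]
      simp only [Ebc]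
      ring
  -- 3P = 2P + P = (c, b - c)
  have hx2 : b ≠ (0 : K) := hb
  have e3 : WeierstrassCurve.Affine.Point.some _ _ h2 + P₀ b c hΔ = .some _ _ h3 := by
    rw [P₀, WeierstrassCurve.Affine.Point.add_of_X_ne hx2]
    have hs : (Ebc b c).slope b 0 (b * c) 0 = c := by
      rw [slope_of_X_ne hx2]
      field_simp
      ring
    apply some_congr
    · rw [WeierstrassCurve.Affine.addX, hs]; simp only [Ebc]; ring
    · rw [WeierstrassCurve.Affine.addY, WeierstrassCurve.Affine.negAddY,
        WeierstrassCurve.Affine.addX, WeierstrassCurve.Affine.negY, hs]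
      simp only [Ebc]
      ring
  -- 5P = 2P + 3P
  rw [show (5 : ℕ) • P₀ b c hΔ
      = (P₀ b c hΔ + P₀ b c hΔ) + ((P₀ b c hΔ + P₀ b c hΔ) + P₀ b c hΔ) from by abel,
    e2, e3, WeierstrassCurve.Affine.Point.add_of_X_ne hbc]
  have hs : (Ebc b c).slope b c (b * c) (b - c) = (b * c - b + c) / (b - c) := by
    rw [slope_of_X_ne hbc, div_eq_div_iff hbc' hbc']
    ring
  apply some_congr'
  · rw [WeierstrassCurve.Affine.addX, hs]
    simp only [Ebc]
    field_simp [hbc']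
    ring
  · rw [WeierstrassCurve.Affine.addY, WeierstrassCurve.Affine.negAddY,
      WeierstrassCurve.Affine.addX, WeierstrassCurve.Affine.negY, hs]
    simp only [Ebc]
    field_simp [hbc']
    ring
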